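/- Let A be the set of bounded Borel-measurable functions on ℝ with the sup metric, C_b(ℝ) the bounded continuous functions, and W₁ the Wasserstein space of order 1 on ℝ. The map φ(a, g, μ) = ∫ y·g(y)·a(y) dμ(y) from A × C_b(ℝ) × W₁ to ℝ is continuous at every point (a,g,μ) with a ∈ C_b(ℝ). -/

import Mathlib

open MeasureTheory Filter Topology Metric Set

-- Integrability of Lipschitz functions under a probability measure with finite first moment.
lemma lipschitz_integrable {K : NNReal} {h : ℝ → ℝ} (hh : LipschitzWith K h)
    (ν : Measure ℝ) [IsProbabilityMeasure ν] (hmom : Integrable (fun x => |x|) ν) :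
    Integrable h ν := by
  refine ((integrable_const |h 0|).add (hmom.const_mul K)).mono'
    hh.continuous.aestronglyMeasurable (Filter.Eventually.of_forall fun x => ?_)
  have := hh.dist_le_mul x 0
  rw [Real.dist_eq, Real.dist_eq, sub_zero] at this
  calc ‖h x‖ = |h x| := rfl
    _ ≤ |h 0| + |h x - h 0| := by
        have := abs_add_le (h 0) (h x - h 0); simpa using this
    _ ≤ |h 0| + K * |x| := by linarith

lemma one_lipschitz_integral_diff_le {h : ℝ → ℝ} (hh : LipschitzWith 1 h)
    (ν μ : Measure ℝ) [IsProbabilityMeasure ν] [IsProbabilityMeasure μ]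
    (hν : Integrable (fun x => |x|) ν) (hμ : Integrable (fun x => |x|) μ) :
    |(∫ x, h x ∂ν) - ∫ x, h x ∂μ| ≤ (∫ x, |x| ∂ν) + ∫ x, |x| ∂μ := by
  have key : ∀ (ρ : Measure ℝ) [IsProbabilityMeasure ρ], Integrable (fun x => |x|) ρ →
      |(∫ x, h x ∂ρ) - h 0| ≤ ∫ x, |x| ∂ρ := by
    intro ρ _ hρ
    have hint : Integrable h ρ := lipschitz_integrable hh ρ hρ
    have : (∫ x, h x ∂ρ) - h 0 = ∫ x, (h x - h 0) ∂ρ := by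
      rw [integral_sub hint (integrable_const _), integral_const]
      simp
    rw [this]
    have h1 : |∫ x, (h x - h 0) ∂ρ| ≤ ∫ x, |h x - h 0| ∂ρ := by
      simpa [Real.norm_eq_abs] using
        norm_integral_le_integral_norm (μ := ρ) (f := fun x => h x - h 0)
    refine h1.trans ?_
    refine integral_mono (hint.sub (integrable_const _)).abs hρ fun x => ?_
    have := hh.dist_le_mul x 0
    rw [Real.dist_eq, Real.dist_eq, sub_zero] at this
    simpa using this
  calc |(∫ x, h x ∂ν) - ∫ x, h x ∂μ|
      = |((∫ x, h x ∂ν) - h 0) - ((∫ x, h x ∂μ) - h 0)| := by ring_nf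
    _ ≤ |(∫ x, h x ∂ν) - h 0| + |(∫ x, h x ∂μ) - h 0| := abs_sub _ _
    _ ≤ (∫ x, |x| ∂ν) + ∫ x, |x| ∂μ := add_le_add (key ν hν) (key μ hμ)


/-- The Wasserstein-1 distance between two measures on ℝ, as the supremum over 1-Lipschitz
test functions of the absolute difference of integrals. -/
noncomputable def wasserstein1 (μ ν : MeasureTheory.Measure ℝ) : ℝ :=
  sSup {d : ℝ | ∃ h : ℝ → ℝ, LipschitzWith 1 h ∧ d = |(∫ x, h x ∂μ) - ∫ x, h x ∂ν|}


lemma abs_integral_sub_le_wasserstein1 {K : NNReal} {h : ℝ → ℝ} (hh : LipschitzWith K h)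
    (ν μ : Measure ℝ) [IsProbabilityMeasure ν] [IsProbabilityMeasure μ]
    (hν : Integrable (fun x => |x|) ν) (hμ : Integrable (fun x => |x|) μ) :
    |(∫ x, h x ∂ν) - ∫ x, h x ∂μ| ≤ K * wasserstein1 ν μ := by
  have bdd : BddAbove {d : ℝ | ∃ h : ℝ → ℝ, LipschitzWith 1 h ∧
      d = |(∫ x, h x ∂ν) - ∫ x, h x ∂μ|} := by
    refine ⟨(∫ x, |x| ∂ν) + ∫ x, |x| ∂μ, fun d hd => ?_⟩
    obtain ⟨h', hh', rfl⟩ := hd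
    exact one_lipschitz_integral_diff_le hh' ν μ hν hμ
  rcases eq_or_ne K 0 with rfl | hK
  · have hconst : ∀ x, h x = h 0 := fun x => by
      have := hh.dist_le_mul x 0
      simp only [NNReal.coe_zero, zero_mul] at this
      exact dist_le_zero.mp this
    have i1 : ∫ x, h x ∂ν = h 0 := by
      rw [integral_congr_ae (Filter.Eventually.of_forall hconst)]; simp
    have i2 : ∫ x, h x ∂μ = h 0 := by
      rw [integral_congr_ae (Filter.Eventually.of_forall hconst)]; simp
    simp [i1, i2]
  · set h' : ℝ → ℝ := fun x => (K : ℝ)⁻¹ * h x with hh'def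
    have hKpos : (0 : ℝ) < K := by positivity
    have lip' : LipschitzWith 1 h' := by
      refine LipschitzWith.of_dist_le_mul fun x y => ?_
      have := hh.dist_le_mul x y
      rw [Real.dist_eq] at this ⊢
      have : |h x - h y| ≤ K * dist x y := by rwa [Real.dist_eq] at this
      calc |h' x - h' y| = (K : ℝ)⁻¹ * |h x - h y| := by
            rw [hh'def, ← mul_sub, abs_mul, abs_of_nonneg (by positivity)]
        _ ≤ (K : ℝ)⁻¹ * (K * dist x y) := by
            exact mul_le_mul_of_nonneg_left this (by positivity)
        _ = 1 * dist x y := by field_simp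
    have mem : |(∫ x, h' x ∂ν) - ∫ x, h' x ∂μ| ∈ {d : ℝ | ∃ h : ℝ → ℝ, LipschitzWith 1 h ∧
        d = |(∫ x, h x ∂ν) - ∫ x, h x ∂μ|} := ⟨h', lip', rfl⟩
    have hle := le_csSup bdd mem
    have heq : |(∫ x, h' x ∂ν) - ∫ x, h' x ∂μ| = (K : ℝ)⁻¹ * |(∫ x, h x ∂ν) - ∫ x, h x ∂μ| := by
      simp only [hh'def, integral_const_mul, ← mul_sub, abs_mul,
        abs_of_nonneg (inv_nonneg.mpr hKpos.le)]
    rw [heq] at hle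
    calc |(∫ x, h x ∂ν) - ∫ x, h x ∂μ|
        = (K : ℝ) * ((K : ℝ)⁻¹ * |(∫ x, h x ∂ν) - ∫ x, h x ∂μ|) := by field_simp
      _ ≤ (K : ℝ) * wasserstein1 ν μ := mul_le_mul_of_nonneg_left hle hKpos.le

lemma tendsto_integral_lipschitz {K : NNReal} {h : ℝ → ℝ} (hh : LipschitzWith K h)
    (μ : Measure ℝ) (μs : ℕ → Measure ℝ)
    [IsProbabilityMeasure μ] [∀ n, IsProbabilityMeasure (μs n)]
    (hμmom : Integrable (fun x => |x|) μ) (hμsmom : ∀ n, Integrable (fun x => |x|) (μs n))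
    (hW : Tendsto (fun n => wasserstein1 (μs n) μ) atTop (nhds 0)) :
    Tendsto (fun n => ∫ x, h x ∂(μs n)) atTop (nhds (∫ x, h x ∂μ)) := by
  have habs : Tendsto (fun n => |(∫ x, h x ∂(μs n)) - ∫ x, h x ∂μ|) atTop (nhds 0) := by
    refine squeeze_zero (fun n => abs_nonneg _)
      (fun n => abs_integral_sub_le_wasserstein1 hh (μs n) μ (hμsmom n) hμmom) ?_
    have := hW.const_mul (K : ℝ)
    simpa using this
  have := (tendsto_zero_iff_abs_tendsto_zero _).mpr habs
  have h2 : Tendsto (fun n => ((∫ x, h x ∂(μs n)) - ∫ x, h x ∂μ) + ∫ x, h x ∂μ) atTop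
      (nhds (0 + ∫ x, h x ∂μ)) := this.add tendsto_const_nhds
  simpa using h2

lemma limsup_closed_le_of_wasserstein
    (μ : Measure ℝ) (μs : ℕ → Measure ℝ)
    [IsProbabilityMeasure μ] [∀ n, IsProbabilityMeasure (μs n)]
    (hμmom : Integrable (fun x => |x|) μ) (hμsmom : ∀ n, Integrable (fun x => |x|) (μs n))
    (hW : Tendsto (fun n => wasserstein1 (μs n) μ) atTop (nhds 0))
    (F : Set ℝ) (hF : IsClosed F) :
    atTop.limsup (fun n => μs n F) ≤ μ F := by
  rcases F.eq_empty_or_nonempty with rfl | hFne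
  · simp [limsup_const]
  have key : ∀ δ : ℝ, 0 < δ → atTop.limsup (fun n => μs n F) ≤ μ (cthickening δ F) := by
    intro δ hδ
    set fδ : ℝ → ℝ := fun x => max (1 - δ⁻¹ * infDist x F) 0 with hfδ
    have lip : LipschitzWith (Real.toNNReal δ⁻¹) fδ := by
      refine LipschitzWith.of_dist_le_mul fun x y => ?_
      rw [Real.dist_eq]
      have h1 : |fδ x - fδ y| ≤ |(1 - δ⁻¹ * infDist x F) - (1 - δ⁻¹ * infDist y F)| :=
        abs_max_sub_max_le_abs _ _ _
      have h2 : |(1 - δ⁻¹ * infDist x F) - (1 - δ⁻¹ * infDist y F)|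
          = δ⁻¹ * |infDist y F - infDist x F| := by
        rw [show (1 - δ⁻¹ * infDist x F) - (1 - δ⁻¹ * infDist y F)
            = δ⁻¹ * (infDist y F - infDist x F) by ring, abs_mul,
          abs_of_nonneg (inv_nonneg.mpr hδ.le)]
      have h3 : |infDist y F - infDist x F| ≤ dist x y := by
        have := (lipschitz_infDist_pt (s := F)).dist_le_mul y x
        rw [Real.dist_eq, NNReal.coe_one, one_mul] at this
        rwa [dist_comm y x] at this
      rw [Real.coe_toNNReal _ (inv_nonneg.mpr hδ.le)]
      calc |fδ x - fδ y| ≤ δ⁻¹ * |infDist y F - infDist x F| := h1.trans_eq h2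
        _ ≤ δ⁻¹ * dist x y := mul_le_mul_of_nonneg_left h3 (inv_nonneg.mpr hδ.le)

    have nonneg : ∀ x, 0 ≤ fδ x := fun x => le_max_right _ _
    have le_one : ∀ x, fδ x ≤ 1 := fun x => by
      apply max_le _ zero_le_one
      have : 0 ≤ δ⁻¹ * infDist x F := mul_nonneg (inv_nonneg.mpr hδ.le) infDist_nonneg
      linarith
    have one_on : ∀ x ∈ F, fδ x = 1 := fun x hx => by
      simp [hfδ, infDist_zero_of_mem hx]
    have zero_out : ∀ x, fδ x ≤ (thickening δ F).indicator (fun _ => (1:ℝ)) x := by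
      intro x
      by_cases hx : x ∈ thickening δ F
      · rw [indicator_of_mem hx]; exact le_one x
      · rw [indicator_of_notMem hx]
        have hge : δ ≤ infDist x F := by
          by_contra hlt
          exact hx ((mem_thickening_iff_infDist_lt hFne).mpr (lt_of_not_ge hlt))
        apply max_le _ le_rfl
        have : 1 ≤ δ⁻¹ * infDist x F := by
          rw [← inv_mul_cancel₀ hδ.ne']
          exact mul_le_mul_of_nonneg_left hge (inv_nonneg.mpr hδ.le)
        linarith
    have integ : ∀ (ρ : Measure ℝ) [IsProbabilityMeasure ρ], Integrable fδ ρ := by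
      intro ρ _
      refine (integrable_const (1:ℝ)).mono' lip.continuous.aestronglyMeasurable
        (Filter.Eventually.of_forall fun x => ?_)
      rw [Real.norm_eq_abs, abs_of_nonneg (nonneg x)]
      exact le_one x
    have step1 : ∀ n, μs n F ≤ ENNReal.ofReal (∫ x, fδ x ∂(μs n)) := by
      intro n
      rw [← ENNReal.ofReal_toReal (measure_ne_top (μs n) F)]
      apply ENNReal.ofReal_le_ofReal
      rw [← measureReal_def, ← integral_indicator_one hF.measurableSet]
      refine integral_mono ((integrable_const (1:ℝ)).indicator hF.measurableSet) (integ _)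
        fun x => ?_
      by_cases hx : x ∈ F
      · simp only [indicator_of_mem hx, Pi.one_apply, one_on x hx]
        exact le_rfl
      · rw [indicator_of_notMem hx]; exact nonneg x
    have step2 : ∫ x, fδ x ∂μ ≤ (μ (thickening δ F)).toReal := by
      rw [← measureReal_def, ← integral_indicator_one isOpen_thickening.measurableSet]
      exact integral_mono (integ _)
        ((integrable_const (1:ℝ)).indicator isOpen_thickening.measurableSet) zero_out
    have conv : Tendsto (fun n => ENNReal.ofReal (∫ x, fδ x ∂(μs n))) atTop
        (nhds (ENNReal.ofReal (∫ x, fδ x ∂μ))) :=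
      (ENNReal.continuous_ofReal.continuousAt).tendsto.comp
        (tendsto_integral_lipschitz lip μ μs hμmom hμsmom hW)
    calc atTop.limsup (fun n => μs n F)
        ≤ atTop.limsup (fun n => ENNReal.ofReal (∫ x, fδ x ∂(μs n))) :=
          limsup_le_limsup (Filter.Eventually.of_forall step1)
      _ = ENNReal.ofReal (∫ x, fδ x ∂μ) := conv.limsup_eq
      _ ≤ ENNReal.ofReal ((μ (thickening δ F)).toReal) := ENNReal.ofReal_le_ofReal step2
      _ = μ (thickening δ F) := ENNReal.ofReal_toReal (measure_ne_top μ _)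
      _ ≤ μ (cthickening δ F) := measure_mono (thickening_subset_cthickening δ F)
  have tend : Tendsto (fun r => μ (cthickening r F)) (𝓝[>] (0:ℝ)) (𝓝 (μ F)) :=
    (tendsto_measure_cthickening_of_isClosed
      ⟨1, one_pos, measure_ne_top μ _⟩ hF).mono_left nhdsWithin_le_nhds
  refine ge_of_tendsto tend ?_
  exact eventually_nhdsWithin_of_forall (s := Set.Ioi 0) (fun δ hδ => key δ hδ)

lemma tendsto_integral_boundedContinuous
    (μ : Measure ℝ) (μs : ℕ → Measure ℝ)
    [hPμ : IsProbabilityMeasure μ] [hPμs : ∀ n, IsProbabilityMeasure (μs n)]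
    (hμmom : Integrable (fun x => |x|) μ) (hμsmom : ∀ n, Integrable (fun x => |x|) (μs n))
    (hW : Tendsto (fun n => wasserstein1 (μs n) μ) atTop (nhds 0))
    (f : BoundedContinuousFunction ℝ ℝ) :
    Tendsto (fun n => ∫ x, f x ∂(μs n)) atTop (nhds (∫ x, f x ∂μ)) := by
  set P : ProbabilityMeasure ℝ := ⟨μ, hPμ⟩
  set Ps : ℕ → ProbabilityMeasure ℝ := fun n => ⟨μs n, hPμs n⟩
  have hconv : Tendsto Ps atTop (nhds P) := by
    apply MeasureTheory.tendsto_of_forall_isOpen_le_liminf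
    intro G hG
    have hclosed := limsup_closed_le_of_wasserstein μ μs hμmom hμsmom hW Gᶜ
      (isClosed_compl_iff.mpr hG)
    have hENN : μ G ≤ atTop.liminf (fun n => μs n G) :=
      le_measure_liminf_of_limsup_measure_compl_le hG.measurableSet hclosed
    have aux : ((atTop.liminf (fun n => Ps n G) : NNReal) : ENNReal) =
        atTop.liminf (fun n => ((Ps n G : NNReal) : ENNReal)) := by
      refine Monotone.map_liminf_of_continuousAt (F := atTop) ENNReal.coe_mono
        (fun n => Ps n G) ENNReal.continuous_coe.continuousAt ?_ ?_
      · exact IsBoundedUnder.isCoboundedUnder_ge ⟨1, Filter.eventually_map.mpr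
          (Filter.Eventually.of_forall fun n => ProbabilityMeasure.apply_le_one _ _)⟩
      · exact ⟨0, Filter.eventually_map.mpr (Filter.Eventually.of_forall fun n => zero_le)⟩
    rw [← ENNReal.coe_le_coe, aux]
    simp only [ProbabilityMeasure.ennreal_coeFn_eq_coeFn_toMeasure]
    exact hENN
  exact ProbabilityMeasure.tendsto_iff_forall_integral_tendsto.mp hconv f

lemma integrable_of_lineargrowth {f : ℝ → ℝ} (hf : Continuous f) {M : ℝ}
    (hfb : ∀ y, |f y| ≤ M * |y|) (ρ : Measure ℝ) (hρ : Integrable (fun x => |x|) ρ) :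
    Integrable f ρ :=
  (hρ.const_mul M).mono' hf.aestronglyMeasurable
    (Filter.Eventually.of_forall fun y => by simpa [Real.norm_eq_abs] using hfb y)

lemma tendsto_integral_lineargrowth
    (f : ℝ → ℝ) (hf : Continuous f) (M : ℝ) (hM : 0 ≤ M) (hfb : ∀ y, |f y| ≤ M * |y|)
    (μ : Measure ℝ) (μs : ℕ → Measure ℝ)
    [IsProbabilityMeasure μ] [∀ n, IsProbabilityMeasure (μs n)]
    (hμmom : Integrable (fun x => |x|) μ) (hμsmom : ∀ n, Integrable (fun x => |x|) (μs n))
    (hW : Tendsto (fun n => wasserstein1 (μs n) μ) atTop (nhds 0)) :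
    Tendsto (fun n => ∫ y, f y ∂(μs n)) atTop (nhds (∫ y, f y ∂μ)) := by
  rw [Metric.tendsto_nhds]
  intro ε hε
  set ε' : ℝ := ε / (16 * (M + 1)) with hε'def
  have hε' : 0 < ε' := by positivity
  -- tail estimate at μ
  have tails : Tendsto (fun k : ℕ => ∫ y, max (|y| - k) 0 ∂μ) atTop (nhds 0) := by
    have h0 : Tendsto (fun k : ℕ => ∫ y, max (|y| - k) 0 ∂μ) atTop (nhds (∫ _y, (0:ℝ) ∂μ)) := by
      refine tendsto_integral_of_dominated_convergence (fun y => |y|) ?_ hμmom ?_ ?_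
      · intro k
        exact (((continuous_abs.sub continuous_const).max continuous_const)).aestronglyMeasurable
      · intro k
        refine Filter.Eventually.of_forall fun y => ?_
        rw [Real.norm_eq_abs, abs_of_nonneg (le_max_right _ _)]
        refine max_le (by simp [sub_le_self_iff]) (abs_nonneg y)
      · refine Filter.Eventually.of_forall fun y => ?_
        refine tendsto_atTop_of_eventually_const (i₀ := ⌈|y|⌉₊) fun k hk => ?_
        have h2 : |y| ≤ (k : ℝ) := le_trans (Nat.le_ceil _) (by exact_mod_cast hk)
        exact max_eq_right (by linarith)
    simpa using h0
  obtain ⟨N₀, hN₀⟩ := (Filter.eventually_atTop).mp (tails.eventually (gt_mem_nhds hε'))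
  set k : ℕ := max N₀ 1
  set t : ℝ := (k : ℝ) with htdef
  have ht : (1:ℝ) ≤ t := by
    have h1 : 1 ≤ k := le_max_right _ _
    rw [htdef]
    exact_mod_cast h1
  have ht0 : (0:ℝ) < t := lt_of_lt_of_le one_pos ht
  set φ : ℝ → ℝ := fun y => max (|y| - t) 0 with hφdef
  have htail : ∫ y, φ y ∂μ < ε' := hN₀ k (le_max_left _ _)
  have φnonneg : ∀ y, 0 ≤ φ y := fun y => le_max_right _ _
  have lipφ : LipschitzWith 1 φ := by
    refine LipschitzWith.of_dist_le_mul fun x y => ?_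
    rw [Real.dist_eq, Real.dist_eq, NNReal.coe_one, one_mul]
    calc |φ x - φ y| ≤ |(|x| - t) - (|y| - t)| := abs_max_sub_max_le_abs _ _ _
      _ = |(|x| - |y|)| := by ring_nf
      _ ≤ |x - y| := abs_abs_sub_abs_le_abs_sub _ _
  have convφ : Tendsto (fun n => ∫ y, φ y ∂(μs n)) atTop (nhds (∫ y, φ y ∂μ)) :=
    tendsto_integral_lipschitz lipφ μ μs hμmom hμsmom hW
  -- truncated function
  set c : ℝ → ℝ := fun y => max (-(2*t)) (min y (2*t)) with hcdef
  have hc : Continuous c := continuous_const.max (continuous_id.min continuous_const)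
  have hcabs : ∀ y, |c y| ≤ 2*t := by
    intro y
    rw [abs_le]
    constructor
    · exact le_max_left _ _
    · exact max_le (by linarith) (min_le_right _ _)
  set fR : ℝ → ℝ := fun y => f (c y) with hfRdef
  have hfRb : ∀ y, |fR y| ≤ M * (2*t) := fun y =>
    (hfb _).trans (mul_le_mul_of_nonneg_left (hcabs y) hM)
  set fRb : BoundedContinuousFunction ℝ ℝ :=
    BoundedContinuousFunction.ofNormedAddCommGroup fR (hf.comp hc) (M * (2*t))
      (fun y => by rw [Real.norm_eq_abs]; exact hfRb y) with hfRbdef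
  have convR : Tendsto (fun n => ∫ y, fR y ∂(μs n)) atTop (nhds (∫ y, fR y ∂μ)) := by
    have := tendsto_integral_boundedContinuous μ μs hμmom hμsmom hW fRb
    simpa [hfRbdef] using this
  have diffbound : ∀ y, |f y - fR y| ≤ 4*M*(φ y) := by
    intro y
    by_cases hy : |y| ≤ 2*t
    · have hcy : c y = y := by
        rw [hcdef]
        simp only []
        rw [min_eq_left (abs_le.mp hy).2, max_eq_right (abs_le.mp hy).1]
      rw [hfRdef]
      simp only [hcy, sub_self, abs_zero]
      exact mul_nonneg (by linarith) (φnonneg y)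
    · push_neg at hy
      have h1 : |f y - fR y| ≤ 2*M*|y| := by
        refine (abs_sub _ _).trans ?_
        have := hfb y
        have h2 := hfRb y
        nlinarith [abs_nonneg y]
      have hφy : φ y = |y| - t := max_eq_left (by nlinarith [abs_nonneg y])
      rw [hφy]
      nlinarith [abs_nonneg y, abs_nonneg (f y - fR y)]
  -- integrability
  have hfint : ∀ (ρ : Measure ℝ), Integrable (fun x => |x|) ρ → Integrable f ρ :=
    fun ρ hρ => integrable_of_lineargrowth hf hfb ρ hρ
  have hfRint : ∀ (ρ : Measure ℝ) [IsProbabilityMeasure ρ], Integrable fR ρ := by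
    intro ρ _
    exact (integrable_const (M*(2*t))).mono' (hf.comp hc).aestronglyMeasurable
      (Filter.Eventually.of_forall fun y => by rw [Real.norm_eq_abs]; exact hfRb y)
  have hφint : ∀ (ρ : Measure ℝ) [IsProbabilityMeasure ρ], Integrable (fun x => |x|) ρ →
      Integrable φ ρ := fun ρ _ hρ => lipschitz_integrable lipφ ρ hρ
  have hsplit : ∀ n, dist (∫ y, f y ∂(μs n)) (∫ y, f y ∂μ) ≤
      4*M*(∫ y, φ y ∂(μs n)) + dist (∫ y, fR y ∂(μs n)) (∫ y, fR y ∂μ)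
        + 4*M*(∫ y, φ y ∂μ) := by
    intro n
    have key : ∀ (ρ : Measure ℝ) [IsProbabilityMeasure ρ], Integrable (fun x => |x|) ρ →
        |(∫ y, f y ∂ρ) - ∫ y, fR y ∂ρ| ≤ 4*M*(∫ y, φ y ∂ρ) := by
      intro ρ _ hρ
      rw [← integral_sub (hfint ρ hρ) (hfRint ρ)]
      have h1 : |∫ y, (f y - fR y) ∂ρ| ≤ ∫ y, |f y - fR y| ∂ρ := by
        simpa [Real.norm_eq_abs] using
          norm_integral_le_integral_norm (μ := ρ) (f := fun y => f y - fR y)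
      refine h1.trans ?_
      rw [show 4*M*(∫ y, φ y ∂ρ) = ∫ y, 4*M*(φ y) ∂ρ by rw [integral_const_mul]]
      exact integral_mono ((hfint ρ hρ).sub (hfRint ρ)).abs
        (((hφint ρ hρ).const_mul (4*M) : _)) diffbound
    rw [Real.dist_eq, Real.dist_eq]
    have k1 := key (μs n) (hμsmom n)
    have k2 := key μ hμmom
    set A := ∫ y, f y ∂(μs n); set A' := ∫ y, fR y ∂(μs n)
    set B := ∫ y, f y ∂μ; set B' := ∫ y, fR y ∂μ
    calc |A - B| = |(A - A') + (A' - B') + (B' - B)| := by ring_nf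
      _ ≤ |A - A'| + |A' - B'| + |B' - B| := by
          refine (abs_add_le _ _).trans ?_
          exact add_le_add (abs_add_le _ _) le_rfl
      _ ≤ 4*M*(∫ y, φ y ∂(μs n)) + |A' - B'| + 4*M*(∫ y, φ y ∂μ) := by
          rw [abs_sub_comm B' B] at *
          exact add_le_add (add_le_add k1 le_rfl) k2
  have ev1 : ∀ᶠ n in atTop, (∫ y, φ y ∂(μs n)) < ε' := convφ.eventually (gt_mem_nhds htail)
  have ev2 : ∀ᶠ n in atTop, dist (∫ y, fR y ∂(μs n)) (∫ y, fR y ∂μ) < ε/4 := by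
    have := Metric.tendsto_nhds.mp convR (ε/4) (by positivity)
    exact this
  filter_upwards [ev1, ev2] with n h1 h2
  have h3 := hsplit n
  have h4 : 4*M*(∫ y, φ y ∂(μs n)) ≤ 4*M*ε' := by nlinarith
  have h5 : 4*M*(∫ y, φ y ∂μ) ≤ 4*M*ε' := by nlinarith
  have h6 : 4*M*ε' ≤ ε/4 := by
    have heq : 4*M*(ε/(16*(M+1))) = (4*M*ε)/(16*(M+1)) := by ring
    rw [hε'def, heq, div_le_div_iff₀ (by positivity) (by norm_num)]
    nlinarith
  have h7 := h4.trans h6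
  have h8 := h5.trans h6
  linarith [h3, h7, h8, h2, hε]

/-- Sequential continuity of `φ(a,g,μ) = ∫ y g(y) a(y) dμ(y)` at points where `a` is
continuous: if `aₙ → a` and `gₙ → g` uniformly (with `aₙ` bounded measurable, `gₙ, a, g`
bounded continuous) and `μₙ → μ` in Wasserstein-1 distance among probability measures with
finite first moment, then `∫ y gₙ(y) aₙ(y) dμₙ(y) → ∫ y g(y) a(y) dμ(y)`. -/
theorem integral_functional_continuous
    (a g : ℝ → ℝ) (aseq gseq : ℕ → ℝ → ℝ)
    (μ : MeasureTheory.Measure ℝ) (μs : ℕ → MeasureTheory.Measure ℝ)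
    [IsProbabilityMeasure μ] [∀ n, IsProbabilityMeasure (μs n)]
    (ha : Continuous a) (habd : ∃ C, ∀ x, |a x| ≤ C)
    (hg : Continuous g) (hgbd : ∃ C, ∀ x, |g x| ≤ C)
    (haseq : ∀ n, Measurable (aseq n)) (haseqbd : ∀ n, ∃ C, ∀ x, |aseq n x| ≤ C)
    (hgseq : ∀ n, Continuous (gseq n)) (hgseqbd : ∀ n, ∃ C, ∀ x, |gseq n x| ≤ C)
    (hμmom : Integrable (fun x => |x|) μ) (hμsmom : ∀ n, Integrable (fun x => |x|) (μs n))
    (haunif : Tendsto (fun n => ⨆ x : ℝ, |aseq n x - a x|) atTop (nhds 0))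
    (hgunif : Tendsto (fun n => ⨆ x : ℝ, |gseq n x - g x|) atTop (nhds 0))
    (hW : Tendsto (fun n => wasserstein1 (μs n) μ) atTop (nhds 0)) :
    Tendsto (fun n => ∫ y, y * gseq n y * aseq n y ∂(μs n)) atTop
      (nhds (∫ y, y * g y * a y ∂μ)) := by
  obtain ⟨A, hA⟩ := habd
  obtain ⟨G, hG⟩ := hgbd
  have hA0 : 0 ≤ A := (abs_nonneg _).trans (hA 0)
  have hG0 : 0 ≤ G := (abs_nonneg _).trans (hG 0)
  set sA : ℕ → ℝ := fun n => ⨆ x : ℝ, |aseq n x - a x| with hsA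
  set sG : ℕ → ℝ := fun n => ⨆ x : ℝ, |gseq n x - g x| with hsG
  have bddA : ∀ n, BddAbove (Set.range fun x => |aseq n x - a x|) := by
    intro n
    obtain ⟨C, hC⟩ := haseqbd n
    refine ⟨C + A, ?_⟩
    rintro d ⟨x, rfl⟩
    exact (abs_sub _ _).trans (add_le_add (hC x) (hA x))
  have bddG : ∀ n, BddAbove (Set.range fun x => |gseq n x - g x|) := by
    intro n
    obtain ⟨C, hC⟩ := hgseqbd n
    refine ⟨C + G, ?_⟩
    rintro d ⟨x, rfl⟩
    exact (abs_sub _ _).trans (add_le_add (hC x) (hG x))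
  have leA : ∀ n x, |aseq n x - a x| ≤ sA n := fun n x => le_ciSup (bddA n) x
  have leG : ∀ n x, |gseq n x - g x| ≤ sG n := fun n x => le_ciSup (bddG n) x
  have sA0 : ∀ n, 0 ≤ sA n := fun n => (abs_nonneg _).trans (leA n 0)
  have sG0 : ∀ n, 0 ≤ sG n := fun n => (abs_nonneg _).trans (leG n 0)
  set B : ℕ → ℝ := fun n => (G + sG n) * sA n + A * sG n with hB
  set f : ℝ → ℝ := fun y => y * g y * a y with hf
  have hfc : Continuous f := (continuous_id.mul hg).mul ha
  have hfbd : ∀ y, |f y| ≤ (G * A) * |y| := by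
    intro y
    rw [hf]
    simp only [abs_mul]
    calc |y| * |g y| * |a y| ≤ |y| * G * A := by
          apply mul_le_mul _ (hA y) (abs_nonneg _) (by positivity)
          exact mul_le_mul_of_nonneg_left (hG y) (abs_nonneg y)
      _ = (G * A) * |y| := by ring
  -- pointwise bound on the difference of the products
  have hdiff : ∀ n y, |gseq n y * aseq n y - g y * a y| ≤ B n := by
    intro n y
    have expand : gseq n y * aseq n y - g y * a y
        = gseq n y * (aseq n y - a y) + a y * (gseq n y - g y) := by ring
    rw [expand]
    refine (abs_add_le _ _).trans ?_
    rw [abs_mul, abs_mul, hB]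
    have hgn : |gseq n y| ≤ G + sG n := by
      have : |gseq n y| ≤ |g y| + |gseq n y - g y| := by
        have := abs_add_le (g y) (gseq n y - g y); simpa using this
      exact this.trans (add_le_add (hG y) (leG n y))
    refine add_le_add ?_ ?_
    · exact mul_le_mul hgn (leA n y) (abs_nonneg _) (add_nonneg hG0 (sG0 n))
    · exact mul_le_mul_of_nonneg_right (hA y) (abs_nonneg _) |>.trans
        (mul_le_mul_of_nonneg_left (leG n y) hA0)
  -- integrability of the integrands
  have hIint : ∀ n, Integrable (fun y => y * gseq n y * aseq n y) (μs n) := by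
    intro n
    obtain ⟨Cg, hCg⟩ := hgseqbd n
    obtain ⟨Ca, hCa⟩ := haseqbd n
    have hCg0 : 0 ≤ Cg := (abs_nonneg _).trans (hCg 0)
    refine ((hμsmom n).const_mul (Cg * Ca)).mono'
      ((measurable_id.mul (hgseq n).measurable).mul (haseq n)).aestronglyMeasurable
      (Filter.Eventually.of_forall fun y => ?_)
    rw [Real.norm_eq_abs, abs_mul, abs_mul]
    calc |y| * |gseq n y| * |aseq n y| ≤ |y| * Cg * Ca := by
          apply mul_le_mul _ (hCa y) (abs_nonneg _) (by positivity)
          exact mul_le_mul_of_nonneg_left (hCg y) (abs_nonneg y)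
      _ = Cg * Ca * |y| := by ring
  have hfint : ∀ n, Integrable f (μs n) :=
    fun n => integrable_of_lineargrowth hfc hfbd (μs n) (hμsmom n)
  -- first moments converge
  have lipabs : LipschitzWith 1 (fun x : ℝ => |x|) := by
    refine LipschitzWith.of_dist_le_mul fun x y => ?_
    rw [Real.dist_eq, Real.dist_eq, NNReal.coe_one, one_mul]
    exact abs_abs_sub_abs_le_abs_sub _ _
  have habsconv : Tendsto (fun n => ∫ y, |y| ∂(μs n)) atTop (nhds (∫ y, |y| ∂μ)) :=
    tendsto_integral_lipschitz lipabs μ μs hμmom hμsmom hW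
  -- term 1 : difference between ∫ Iₙ dμₙ and ∫ f dμₙ tends to 0
  have hBtend : Tendsto B atTop (nhds 0) := by
    have h1 : Tendsto (fun n => (G + sG n) * sA n + A * sG n) atTop
        (nhds ((G + 0) * 0 + A * 0)) :=
      ((tendsto_const_nhds.add hgunif).mul haunif).add (tendsto_const_nhds.mul hgunif)
    simpa using h1
  have hprod : Tendsto (fun n => B n * ∫ y, |y| ∂(μs n)) atTop (nhds 0) := by
    have := hBtend.mul habsconv
    simpa using this
  have hterm1bd : ∀ n, |(∫ y, y * gseq n y * aseq n y ∂(μs n)) - ∫ y, f y ∂(μs n)|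
      ≤ B n * ∫ y, |y| ∂(μs n) := by
    intro n
    rw [← integral_sub (hIint n) (hfint n)]
    have h1 : |∫ y, (y * gseq n y * aseq n y - f y) ∂(μs n)|
        ≤ ∫ y, |y * gseq n y * aseq n y - f y| ∂(μs n) := by
      simpa [Real.norm_eq_abs] using norm_integral_le_integral_norm (μ := μs n)
        (f := fun y => y * gseq n y * aseq n y - f y)
    refine h1.trans ?_
    rw [show B n * ∫ y, |y| ∂(μs n) = ∫ y, B n * |y| ∂(μs n) by rw [integral_const_mul]]
    refine integral_mono ((hIint n).sub (hfint n)).abs ((hμsmom n).const_mul (B n))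
      fun y => ?_
    have expand : y * gseq n y * aseq n y - f y = y * (gseq n y * aseq n y - g y * a y) := by
      rw [hf]; ring
    rw [expand, abs_mul]
    calc |y| * |gseq n y * aseq n y - g y * a y| ≤ |y| * B n :=
          mul_le_mul_of_nonneg_left (hdiff n y) (abs_nonneg y)
      _ = B n * |y| := by ring
  have hterm1 : Tendsto (fun n => (∫ y, y * gseq n y * aseq n y ∂(μs n)) - ∫ y, f y ∂(μs n))
      atTop (nhds 0) :=
    (tendsto_zero_iff_abs_tendsto_zero _).mpr
      (squeeze_zero (fun n => abs_nonneg _) hterm1bd hprod)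
  have hterm2 : Tendsto (fun n => ∫ y, f y ∂(μs n)) atTop (nhds (∫ y, f y ∂μ)) :=
    tendsto_integral_lineargrowth f hfc (G * A) (by positivity) hfbd μ μs hμmom hμsmom hW
  have := hterm1.add hterm2
  simpa using this
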